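/- arXiv:2209.02791 — 2 statements merged into one kernel-verified Lean document; each statement's English description precedes it below -/
import Mathlib

section
/- Let a ∈ ℂ with a ≠ 0 and let m be the continuous self-map of the one-point compactification ℂ ∪ {∞} of the complex plane determined by m(z) = a·z for z ∈ ℂ and m(∞) = ∞. Then m is continuous and homotopic to the identity map of ℂ ∪ {∞}. (The scaling case f₃ in the proof of Proposition 5.3.) -/
open OnePoint Filter Topology unitInterval Bornology

private lemma scaling_aux (q : unitInterval → ℂ) (hqc : Continuous q)
    (hq : ∀ t, q t ≠ 0) :
    Continuous (fun pr : unitInterval × OnePoint ℂ =>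
      pr.2.elim ∞ (fun z => ((q pr.1 * z : ℂ) : OnePoint ℂ))) := by
  set g : unitInterval × OnePoint ℂ → OnePoint ℂ :=
    fun pr => pr.2.elim ∞ (fun z => ((q pr.1 * z : ℂ) : OnePoint ℂ)) with hgdef
  -- lower bound on ‖q t‖
  obtain ⟨t₀, -, ht₀⟩ := isCompact_univ.exists_isMinOn (Set.univ_nonempty)
    (hqc.norm.continuousOn)
  have hc : 0 < ‖q t₀‖ := norm_pos_iff.mpr (hq t₀)
  rw [continuous_iff_continuousAt]
  rintro ⟨t, x⟩
  induction x with
  | infty =>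
      have hval : g (t, ∞) = ∞ := rfl
      rw [ContinuousAt, hval, nhds_prod_eq]
      have hsplit : (𝓝 t) ×ˢ (𝓝 (∞ : OnePoint ℂ)) =
          (𝓝 t) ×ˢ (Filter.map ((↑) : ℂ → OnePoint ℂ) (coclosedCompact ℂ)) ⊔
            (𝓝 t) ×ˢ (pure (∞ : OnePoint ℂ)) := by
        rw [← Filter.prod_sup, ← nhds_infty_eq]
      rw [hsplit, tendsto_sup]
      constructor
      · rw [Filter.prod_map_right, tendsto_map'_iff]
        have hcoe : Tendsto ((↑) : ℂ → OnePoint ℂ) (coclosedCompact ℂ) (𝓝 ∞) := by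
          rw [← comap_coe_nhds_infty]; exact tendsto_comap
        show Tendsto (fun pr : unitInterval × ℂ => ((q pr.1 * pr.2 : ℂ) : OnePoint ℂ))
          ((𝓝 t) ×ˢ coclosedCompact ℂ) (𝓝 ∞)
        refine hcoe.comp ?_
        rw [coclosedCompact_eq_cocompact, ← Metric.cobounded_eq_cocompact]
        have h1 : Tendsto (fun pr : unitInterval × ℂ => ‖q t₀‖ * ‖pr.2‖)
            ((𝓝 t) ×ˢ (cobounded ℂ)) atTop := by
          refine Tendsto.const_mul_atTop hc ?_
          exact tendsto_norm_cobounded_atTop.comp tendsto_snd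
        rw [← tendsto_norm_atTop_iff_cobounded]
        refine tendsto_atTop_mono (fun pr => ?_) h1
        show ‖q t₀‖ * ‖pr.2‖ ≤ ‖q pr.1 * pr.2‖
        rw [norm_mul]
        exact mul_le_mul_of_nonneg_right (ht₀ (Set.mem_univ pr.1)) (norm_nonneg _)
      · rw [Filter.prod_pure, tendsto_map'_iff]
        show Tendsto (fun _ : unitInterval => (∞ : OnePoint ℂ)) (𝓝 t) (𝓝 ∞)
        exact tendsto_const_nhds
  | coe z =>
      have hmap : 𝓝 ((z : OnePoint ℂ)) = Filter.map ((↑) : ℂ → OnePoint ℂ) (𝓝 z) :=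
        (isOpenEmbedding_coe.map_nhds_eq z).symm
      have hval : g (t, (z : OnePoint ℂ)) = ((q t * z : ℂ) : OnePoint ℂ) := rfl
      rw [ContinuousAt, hval, nhds_prod_eq, hmap, ← Filter.map_id (f := 𝓝 t),
        Filter.prod_map_map_eq, tendsto_map'_iff]
      have : Continuous (fun pr : unitInterval × ℂ => ((q pr.1 * pr.2 : ℂ) : OnePoint ℂ)) :=
        continuous_coe.comp ((hqc.comp continuous_fst).mul continuous_snd)
      have h2 := this.continuousAt (x := (t, z))
      rw [ContinuousAt, nhds_prod_eq] at h2
      exact h2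

/-- The scaling case in the proof of Proposition 5.3: for `a ≠ 0`, the self-map
`z ↦ a * z`, `∞ ↦ ∞` of the Riemann sphere `ℂ ∪ {∞}` is continuous and
homotopic to the identity. -/
theorem scaling_homotopic_id
    (a : ℂ) (ha : a ≠ 0) (m : OnePoint ℂ → OnePoint ℂ)
    (hm : ∀ z : ℂ, m (z : OnePoint ℂ) = ((a * z : ℂ) : OnePoint ℂ))
    (hminf : m ∞ = ∞) :
    ∃ hc : Continuous m,
      (⟨m, hc⟩ : C(OnePoint ℂ, OnePoint ℂ)).Homotopic (ContinuousMap.id (OnePoint ℂ)) := by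
  -- a path from `a` to `1` avoiding `0`
  have hpc : IsPathConnected ({0}ᶜ : Set ℂ) := by
    apply isPathConnected_compl_singleton_of_one_lt_rank
    rw [Complex.rank_real_complex]
    norm_num
  obtain ⟨γ, hγ⟩ := hpc.joinedIn a (by simpa using ha) 1 (by simp)
  have hγne : ∀ t, γ t ≠ 0 := fun t => hγ t
  have hcont := scaling_aux (fun t => γ t) γ.continuous hγne
  have hc : Continuous m := by
    have h1 := hcont.comp
      (Continuous.prodMk (continuous_const (y := (0 : unitInterval))) continuous_id)
    have h2 : m = (fun pr : unitInterval × OnePoint ℂ =>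
        pr.2.elim ∞ (fun z => ((γ pr.1 * z : ℂ) : OnePoint ℂ))) ∘
        (fun x => ((0 : unitInterval), x)) := by
      funext x
      induction x with
      | infty => exact hminf
      | coe z => simp [Function.comp, hm z, γ.source]
    rw [h2]
    exact h1
  refine ⟨hc, ⟨⟨⟨fun pr => pr.2.elim ∞ (fun z => ((γ pr.1 * z : ℂ) : OnePoint ℂ)), hcont⟩,
    ?_, ?_⟩⟩⟩
  · intro x
    induction x with
    | infty => simp [hminf]
    | coe z => simp [hm z, γ.source]
  · intro x
    induction x with
    | infty => simp
    | coe z => simp [γ.target]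
end

section
/- Let a, b ∈ ℂ with a ≠ 0 and let m be the continuous self-map of the one-point compactification ℂ ∪ {∞} of the complex plane determined by m(z) = a·z + b for z ∈ ℂ and m(∞) = ∞. Then m is continuous and homotopic to the identity map of ℂ ∪ {∞}. (The affine case, covering Möbius transformations with c = 0, in Proposition 5.3.) -/
open OnePoint Filter Topology Bornology

noncomputable def Aaux (a : ℂ) (t : ℝ) : ℂ := Complex.exp ((1 - (t : ℂ)) * Complex.log a)

noncomputable def faux (a b : ℂ) (p : ℂ × ℝ) : ℂ := Aaux a p.2 * p.1 + (1 - (p.2 : ℂ)) * b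

noncomputable def Haux (a b : ℂ) (p : unitInterval × OnePoint ℂ) : OnePoint ℂ :=
  OnePoint.map (fun z => faux a b (z, (p.1 : ℝ))) p.2

lemma Aaux_cont (a : ℂ) : Continuous (Aaux a) :=
  Complex.continuous_exp.comp (((continuous_const.sub Complex.continuous_ofReal).mul
    continuous_const))

lemma faux_cont (a b : ℂ) : Continuous (faux a b) :=
  (((Aaux_cont a).comp continuous_snd).mul continuous_fst).add
    (((continuous_const.sub (Complex.continuous_ofReal.comp continuous_snd)).mul
      continuous_const))

lemma Aaux_ne (a : ℂ) (t : ℝ) : Aaux a t ≠ 0 := Complex.exp_ne_zero _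

lemma Haux_cont (a b : ℂ) : Continuous (Haux a b) := by
  rw [continuous_iff_continuousAt]
  rintro ⟨t, x⟩
  induction x using OnePoint.rec with
  | infty =>
    -- continuity at (t, ∞)
    have hbound : ∃ ε > 0, ∀ s : unitInterval, ε ≤ ‖Aaux a (s : ℝ)‖ := by
      obtain ⟨s₀, -, hs₀⟩ := isCompact_univ.exists_isMinOn (Set.univ_nonempty)
        (((Aaux_cont a).comp continuous_subtype_val).norm.continuousOn
          (s := (Set.univ : Set unitInterval)))
      exact ⟨‖Aaux a (s₀ : ℝ)‖, norm_pos_iff.2 (Aaux_ne a _), fun s => hs₀ (Set.mem_univ s)⟩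
    obtain ⟨ε, hε, hεle⟩ := hbound
    have hg' : Tendsto (fun q : unitInterval × ℂ => faux a b (q.2, (q.1 : ℝ)))
        (𝓝 t ×ˢ cobounded ℂ) (cobounded ℂ) := by
      rw [← tendsto_norm_atTop_iff_cobounded]
      have hmono : ∀ q : unitInterval × ℂ,
          ε * ‖q.2‖ - ‖b‖ ≤ ‖faux a b (q.2, (q.1 : ℝ))‖ := by
        rintro ⟨s, z⟩
        have h1 : ε * ‖z‖ ≤ ‖Aaux a (s : ℝ) * z‖ := by
          rw [norm_mul]
          exact mul_le_mul_of_nonneg_right (hεle s) (norm_nonneg z)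
        have h2 : ‖(1 - ((s : ℝ) : ℂ)) * b‖ ≤ ‖b‖ := by
          rw [norm_mul]
          have hle1 : ‖(1 - ((s : ℝ) : ℂ))‖ ≤ 1 := by
            have heq : (1 - ((s : ℝ) : ℂ)) = (((1 - (s : ℝ) : ℝ)) : ℂ) := by push_cast; ring
            rw [heq, Complex.norm_real, Real.norm_eq_abs, abs_of_nonneg
              (by linarith [s.2.2])]
            linarith [s.2.1]
          calc ‖(1 - ((s : ℝ) : ℂ))‖ * ‖b‖ ≤ 1 * ‖b‖ :=
                mul_le_mul_of_nonneg_right hle1 (norm_nonneg b)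
            _ = ‖b‖ := one_mul _
        have h3 : ‖Aaux a (s : ℝ) * z‖ ≤
            ‖Aaux a (s : ℝ) * z + (1 - ((s : ℝ) : ℂ)) * b‖ + ‖(1 - ((s : ℝ) : ℂ)) * b‖ := by
          simpa using norm_add_le (Aaux a (s : ℝ) * z + (1 - ((s : ℝ) : ℂ)) * b)
            (-((1 - ((s : ℝ) : ℂ)) * b))
        show ε * ‖z‖ - ‖b‖ ≤ ‖Aaux a (s : ℝ) * z + (1 - ((s : ℝ) : ℂ)) * b‖
        linarith
      refine tendsto_atTop_mono hmono ?_
      have h1 : Tendsto (fun q : unitInterval × ℂ => ‖q.2‖)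
          (𝓝 t ×ˢ cobounded ℂ) atTop :=
        tendsto_norm_cobounded_atTop.comp tendsto_snd
      exact tendsto_atTop_add_const_right _ _ (h1.const_mul_atTop hε)
    have hg : Tendsto (fun q : unitInterval × ℂ => faux a b (q.2, (q.1 : ℝ)))
        (𝓝 t ×ˢ coclosedCompact ℂ) (coclosedCompact ℂ) := by
      rw [coclosedCompact_eq_cocompact, ← Metric.cobounded_eq_cocompact]
      exact hg'
    have hdom : 𝓝 (t, (∞ : OnePoint ℂ)) =
        (𝓝 t ×ˢ map ((↑) : ℂ → OnePoint ℂ) (coclosedCompact ℂ)) ⊔ (𝓝 t ×ˢ pure ∞) := by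
      rw [nhds_prod_eq, OnePoint.nhds_infty_eq, Filter.prod_sup]
    have key : Tendsto (Haux a b) (𝓝 (t, (∞ : OnePoint ℂ))) (𝓝 (∞ : OnePoint ℂ)) := by
      rw [hdom, tendsto_sup]
      constructor
      · rw [← Filter.map_id (f := 𝓝 t), Filter.prod_map_map_eq, tendsto_map'_iff]
        have heq : (Haux a b ∘ fun p : unitInterval × ℂ => (id p.1, (p.2 : OnePoint ℂ))) =
            fun q : unitInterval × ℂ => ((faux a b (q.2, (q.1 : ℝ)) : ℂ) : OnePoint ℂ) := rfl
        rw [heq]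
        exact OnePoint.tendsto_coe_infty.comp hg
      · have hconst : Tendsto (fun _ : unitInterval × OnePoint ℂ => (∞ : OnePoint ℂ))
            (𝓝 t ×ˢ pure (∞ : OnePoint ℂ)) (𝓝 (∞ : OnePoint ℂ)) := tendsto_const_nhds
        refine hconst.congr' ?_
        filter_upwards [prod_mem_prod (Filter.univ_mem)
          (mem_pure.2 (Set.mem_singleton (∞ : OnePoint ℂ)))] with p hp
        obtain ⟨-, hp2⟩ := hp
        simp only [Set.mem_singleton_iff] at hp2
        simp [Haux, hp2]
    exact key
  | coe z =>
    have key : Tendsto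
        (fun q : unitInterval × ℂ => ((faux a b (q.2, (q.1 : ℝ)) : ℂ) : OnePoint ℂ))
        (𝓝 t ×ˢ 𝓝 z) (𝓝 ((faux a b (z, (t : ℝ)) : ℂ) : OnePoint ℂ)) := by
      have := (OnePoint.continuous_coe.comp ((faux_cont a b).comp
        (continuous_snd.prodMk (continuous_subtype_val.comp continuous_fst)))).continuousAt
        (x := (t, z))
      rwa [ContinuousAt, nhds_prod_eq] at this
    rw [ContinuousAt, nhds_prod_eq, OnePoint.nhds_coe_eq, ← Filter.map_id (f := 𝓝 t),
      Filter.prod_map_map_eq, tendsto_map'_iff]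
    exact key

/-- The affine case (Möbius transformations with `c = 0`) in Proposition 5.3:
for `a ≠ 0`, the self-map `z ↦ a * z + b`, `∞ ↦ ∞` of the Riemann sphere
`ℂ ∪ {∞}` is continuous and homotopic to the identity. -/
theorem affine_homotopic_id
    (a b : ℂ) (ha : a ≠ 0) (m : OnePoint ℂ → OnePoint ℂ)
    (hm : ∀ z : ℂ, m (z : OnePoint ℂ) = ((a * z + b : ℂ) : OnePoint ℂ))
    (hminf : m ∞ = ∞) :
    ∃ hc : Continuous m,
      (⟨m, hc⟩ : C(OnePoint ℂ, OnePoint ℂ)).Homotopic (ContinuousMap.id (OnePoint ℂ)) := by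
  have hA0 : Aaux a 0 = a := by
    simp [Aaux, Complex.exp_log ha]
  have hA1 : Aaux a 1 = 1 := by
    simp [Aaux]
  have hm0 : ∀ x : OnePoint ℂ, Haux a b (0, x) = m x := by
    intro x
    induction x using OnePoint.rec with
    | infty => simp [Haux, hminf]
    | coe z => simp [Haux, faux, hA0, hm]
  have hm1 : ∀ x : OnePoint ℂ, Haux a b (1, x) = x := by
    intro x
    induction x using OnePoint.rec with
    | infty => simp [Haux]
    | coe z => simp [Haux, faux, hA1]
  have hc : Continuous m := by
    have hme : m = fun x => Haux a b (0, x) := by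
      funext x; exact (hm0 x).symm
    rw [hme]
    exact (Haux_cont a b).comp (continuous_const.prodMk continuous_id)
  exact ⟨hc, ⟨⟨⟨fun p => Haux a b p, Haux_cont a b⟩, hm0, hm1⟩⟩⟩
end
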